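/- Let p, q be positive reals and α, β, ν real numbers with p^ν ≠ q^α, and let ν₀, B, λ₀ be real numbers. If the sequence λ : ℕ → ℝ satisfies λ(0) = λ₀ and the recurrence λ(n+1) = p^ν · λ(n) + q^(αν₀ + β) · (1 + (−1)^n · B) · q^(αn) for all n ∈ ℕ, then for all n ∈ ℕ, λ(n) = p^(nν) · λ₀ + q^(αν₀ + β) · ( (p^(nν) − q^(nα))/(p^ν − q^α) + B · (p^(nν) − (−1)^n · q^(nα))/(p^ν + q^α) ). -/

import Mathlib

open Real

theorem stmt_11 (p q α β ν ν₀ B Λ₀ : ℝ) (hp : 0 < p) (hq : 0 < q)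
    (hne : p ^ ν ≠ q ^ α) (l : ℕ → ℝ) (hl0 : l 0 = Λ₀)
    (hrec : ∀ n : ℕ, l (n + 1) = p ^ ν * l n
      + q ^ (α * ν₀ + β) * (1 + (-1 : ℝ) ^ n * B) * q ^ (α * n)) :
    ∀ n : ℕ, l n = p ^ ((n : ℝ) * ν) * Λ₀
      + q ^ (α * ν₀ + β) *
        ((p ^ ((n : ℝ) * ν) - q ^ ((n : ℝ) * α)) / (p ^ ν - q ^ α)
          + B * (p ^ ((n : ℝ) * ν) - (-1 : ℝ) ^ n * q ^ ((n : ℝ) * α))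
              / (p ^ ν + q ^ α)) := by
  have hP : ∀ n : ℕ, p ^ ((n : ℝ) * ν) = (p ^ ν) ^ n := fun n => by
    rw [← Real.rpow_natCast (p ^ ν) n, ← Real.rpow_mul hp.le, mul_comm]
  have hQ : ∀ n : ℕ, q ^ ((n : ℝ) * α) = (q ^ α) ^ n := fun n => by
    rw [← Real.rpow_natCast (q ^ α) n, ← Real.rpow_mul hq.le, mul_comm]
  have hQ' : ∀ n : ℕ, q ^ (α * (n : ℝ)) = (q ^ α) ^ n := fun n => by
    rw [mul_comm]; exact hQ n
  have hsub : p ^ ν - q ^ α ≠ 0 := sub_ne_zero.mpr hne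
  have hadd : p ^ ν + q ^ α ≠ 0 := by positivity
  intro n
  induction n with
  | zero =>
    simp only [hP, hQ, hl0, Nat.cast_zero, pow_zero]
    field_simp
    simp
  | succ n ih =>
    rw [hrec n, ih]
    simp only [hP, hQ, hQ', pow_succ]
    field_simp
    ring
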